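/- There exists a constant C > 0 such that for every n ∈ ℤ and every y ∈ [2^{n-1}, 2^{n+2}], the one-dimensional Dirichlet heat kernel T_t(x,y) = H_t(x-y) - H_t(x+y) satisfies ∫_0^∞ ∫_{4^n}^∞ |∂_x T_t(x,y)| t^{-1/2} dt dx ≤ C. -/

import Mathlib

open Real Set MeasureTheory

noncomputable def H (t u : ℝ) : ℝ := (4 * π * t) ^ (-(1:ℝ)/2) * Real.exp (-u^2 / (4*t))

noncomputable def Tdir (t x y : ℝ) : ℝ := H t (x - y) - H t (x + y)

/-! ### Auxiliary lemmas -/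

lemma aux_exp_hasDerivAt (c u : ℝ) :
    HasDerivAt (fun u : ℝ => Real.exp (-u^2 / c)) (Real.exp (-u^2 / c) * (-(2*u) / c)) u := by
  have h : HasDerivAt (fun u : ℝ => -u^2 / c) (-(2*u) / c) u := by
    simpa using ((hasDerivAt_pow 2 u).neg).div_const c
  exact h.exp

lemma hasDerivAt_Tdir (t x y : ℝ) :
    HasDerivAt (fun x' => Tdir t x' y)
      ((4*π*t) ^ (-(1:ℝ)/2) * (Real.exp (-(x-y)^2 / (4*t)) * (-(2*(x-y)) / (4*t)))
        - (4*π*t) ^ (-(1:ℝ)/2) * (Real.exp (-(x+y)^2 / (4*t)) * (-(2*(x+y)) / (4*t)))) x := by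
  have h1 : HasDerivAt (fun x' : ℝ => -(x'-y)^2/(4*t)) (-(2*(x-y))/(4*t)) x := by
    have := ((((hasDerivAt_id x).sub_const y).pow 2).neg).div_const (4*t)
    simpa using this
  have h2 : HasDerivAt (fun x' : ℝ => -(x'+y)^2/(4*t)) (-(2*(x+y))/(4*t)) x := by
    have := ((((hasDerivAt_id x).add_const y).pow 2).neg).div_const (4*t)
    simpa using this
  have H1 := (h1.exp).const_mul ((4*π*t) ^ (-(1:ℝ)/2))
  have H2 := (h2.exp).const_mul ((4*π*t) ^ (-(1:ℝ)/2))
  have := H1.sub H2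
  simp only [Tdir, H, mul_assoc] at this ⊢
  exact this

lemma hasDerivAt_phi (t u : ℝ) (ht : 0 < t) :
    HasDerivAt (fun u : ℝ => u * Real.exp (-u^2/(4*t)))
      (Real.exp (-u^2/(4*t)) * (1 - u^2/(2*t))) u := by
  have h : HasDerivAt (fun u : ℝ => -u^2 / (4*t)) (-(2*u) / (4*t)) u := by
    simpa using ((hasDerivAt_pow 2 u).neg).div_const (4*t)
  have h2 := (hasDerivAt_id' (x := u)).mul h.exp
  refine h2.congr_deriv ?_
  have ht' : t ≠ 0 := ht.ne'
  field_simp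
  ring

lemma phi_deriv_bound (t u : ℝ) (ht : 0 < t) :
    |Real.exp (-u^2/(4*t)) * (1 - u^2/(2*t))| ≤ 8 * Real.exp (-u^2/(8*t)) := by
  have ht' : t ≠ 0 := ht.ne'
  have hs : 0 ≤ u^2/(4*t) := by positivity
  have e1 : u^2/(2*t) = 2 * (u^2/(4*t)) := by field_simp; ring
  have e2 : -u^2/(8*t) = -((u^2/(4*t))/2) := by rw [neg_div, div_div]; ring_nf
  set s := u^2/(4*t) with hsdef
  rw [e1, show -u^2/(4*t) = -s by rw [hsdef]; ring, e2]
  have habs : |Real.exp (-s) * (1 - 2*s)| ≤ Real.exp (-s) * (1 + 2*s) := by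
    rw [abs_mul, abs_of_nonneg (Real.exp_pos _).le]
    exact mul_le_mul_of_nonneg_left (abs_le.2 ⟨by linarith, by linarith⟩) (Real.exp_pos _).le
  refine habs.trans ?_
  have h1 : 1 + 2*s ≤ 8 * Real.exp (s/2) := by
    nlinarith [Real.add_one_le_exp (s/2)]
  calc Real.exp (-s) * (1 + 2*s) ≤ Real.exp (-s) * (8 * Real.exp (s/2)) :=
        mul_le_mul_of_nonneg_left h1 (Real.exp_pos _).le
    _ = 8 * Real.exp (-(s/2)) := by
        rw [show Real.exp (-s) * (8 * Real.exp (s/2)) = 8 * (Real.exp (-s) * Real.exp (s/2)) by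
          ring, ← Real.exp_add]
        ring_nf

lemma phi_diff_bound (t a b C : ℝ) (ht : 0 < t) (hab : a ≤ b)
    (hC : ∀ u ∈ Icc a b, 8 * Real.exp (-u^2/(8*t)) ≤ C) :
    |b * Real.exp (-b^2/(4*t)) - a * Real.exp (-a^2/(4*t))| ≤ C * (b - a) := by
  have key := (convex_Icc a b).norm_image_sub_le_of_norm_hasDerivWithin_le
    (f := fun u : ℝ => u * Real.exp (-u^2/(4*t)))
    (f' := fun u : ℝ => Real.exp (-u^2/(4*t)) * (1 - u^2/(2*t)))
    (fun u _ => (hasDerivAt_phi t u ht).hasDerivWithinAt)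
    (fun u hu => le_trans (by rw [Real.norm_eq_abs]; exact phi_deriv_bound t u ht) (hC u hu))
    (left_mem_Icc.2 hab) (right_mem_Icc.2 hab)
  simpa [Real.norm_eq_abs, abs_of_nonneg (sub_nonneg.2 hab)] using key

lemma deriv_Tdir_bound (t x y : ℝ) (ht : 0 < t) :
    |deriv (fun x' => Tdir t x' y) x| * t ^ (-(1:ℝ)/2)
      ≤ (1/(2*t^2)) *
        |(x+y) * Real.exp (-(x+y)^2/(4*t)) - (x-y) * Real.exp (-(x-y)^2/(4*t))| := by
  have ht' : t ≠ 0 := ht.ne'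
  rw [(hasDerivAt_Tdir t x y).deriv]
  have hd : (4*π*t) ^ (-(1:ℝ)/2) * (Real.exp (-(x-y)^2 / (4*t)) * (-(2*(x-y)) / (4*t)))
        - (4*π*t) ^ (-(1:ℝ)/2) * (Real.exp (-(x+y)^2 / (4*t)) * (-(2*(x+y)) / (4*t)))
      = ((4*π*t) ^ (-(1:ℝ)/2) / (2*t)) *
        ((x+y) * Real.exp (-(x+y)^2/(4*t)) - (x-y) * Real.exp (-(x-y)^2/(4*t))) := by
    field_simp
    ring
  rw [hd, abs_mul, abs_of_nonneg (by positivity :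
    (0:ℝ) ≤ (4*π*t) ^ (-(1:ℝ)/2) / (2*t))]
  set A := |(x+y) * Real.exp (-(x+y)^2/(4*t)) - (x-y) * Real.exp (-(x-y)^2/(4*t))| with hA
  have hA0 : 0 ≤ A := abs_nonneg _
  have hc : (4*π*t) ^ (-(1:ℝ)/2) = (4*π) ^ (-(1:ℝ)/2) * t ^ (-(1:ℝ)/2) :=
    Real.mul_rpow (by positivity) ht.le
  have ht2 : t ^ (-(1:ℝ)/2) * t ^ (-(1:ℝ)/2) = t⁻¹ := by
    rw [← Real.rpow_add ht, show -(1:ℝ)/2 + -(1:ℝ)/2 = -1 by norm_num, Real.rpow_neg_one]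
  have hπ : (4*π) ^ (-(1:ℝ)/2) ≤ 1 :=
    Real.rpow_le_one_of_one_le_of_nonpos (by nlinarith [Real.pi_gt_three]) (by norm_num)
  calc (4*π*t) ^ (-(1:ℝ)/2) / (2*t) * A * t ^ (-(1:ℝ)/2)
      = (4*π) ^ (-(1:ℝ)/2) * ((t ^ (-(1:ℝ)/2) * t ^ (-(1:ℝ)/2)) * (A / (2*t))) := by
        rw [hc]; ring
    _ = (4*π) ^ (-(1:ℝ)/2) * ((1/(2*t^2)) * A) := by
        rw [ht2]; ring
    _ ≤ 1 * ((1/(2*t^2)) * A) := by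
        apply mul_le_mul_of_nonneg_right hπ
        positivity
    _ = (1/(2*t^2)) * A := one_mul _

theorem dirichlet_A4 :
    ∃ C : ℝ, 0 < C ∧ ∀ n : ℤ, ∀ y : ℝ, y ∈ Icc ((2:ℝ)^(n-1)) ((2:ℝ)^(n+2)) →
      ∫ x in Ioi (0:ℝ), ∫ t in Ioi ((4:ℝ)^n),
        |deriv (fun x' => Tdir t x' y) x| * t ^ (-(1:ℝ)/2) ≤ C := by
  refine ⟨384, by norm_num, ?_⟩
  intro n y hy
  set p : ℝ := (2:ℝ)^n with hp_def
  have hp : 0 < p := by positivity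
  set T₀ : ℝ := (4:ℝ)^n with hT_def
  have hT0 : 0 < T₀ := by positivity
  have hT : T₀ = p^2 := by
    rw [hT_def, hp_def, show (4:ℝ) = (2:ℝ)^(2:ℤ) by norm_num, ← zpow_mul, mul_comm,
      zpow_mul, zpow_two]
    norm_num [sq]
  have hy2 : y ≤ 4 * p := by
    have h : (2:ℝ)^(n+2) = p * 4 := by
      rw [hp_def, zpow_add₀ (by norm_num : (2:ℝ) ≠ 0)]; norm_num
    have := hy.2; rw [h] at this; linarith
  have hy0 : 0 < y := lt_of_lt_of_le (by positivity) hy.1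
  set M : ℝ := 8 * p with hM_def
  have hM : 0 < M := by positivity
  -- Region A bound on the inner integral, valid for all x
  have hint2 : IntegrableOn (fun t : ℝ => 8*y * t^(-2:ℝ)) (Ioi T₀) :=
    (integrableOn_Ioi_rpow_of_lt (by norm_num) hT0).const_mul _
  have hval2 : ∫ t in Ioi T₀, 8*y * t^(-2:ℝ) = 8*y/T₀ := by
    rw [MeasureTheory.integral_const_mul, integral_Ioi_rpow_of_lt (by norm_num) hT0]
    norm_num [Real.rpow_neg_one]
    ring
  have hrp : ∀ t : ℝ, 0 < t → t^(-2:ℝ) = (t^2)⁻¹ := by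
    intro t ht
    rw [show (-2:ℝ) = -(2:ℝ) by norm_num, Real.rpow_neg ht.le, Real.rpow_two]
  have FboundA : ∀ x : ℝ,
      (∫ t in Ioi T₀, |deriv (fun x' => Tdir t x' y) x| * t ^ (-(1:ℝ)/2)) ≤ 8*y/T₀ := by
    intro x
    rw [← hval2]
    apply integral_mono_of_nonneg
    · filter_upwards [ae_restrict_mem measurableSet_Ioi] with t ht
      have ht0 : 0 < t := hT0.trans ht
      positivity
    · exact hint2
    · filter_upwards [ae_restrict_mem measurableSet_Ioi] with t ht
      have ht0 : 0 < t := hT0.trans ht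
      refine (deriv_Tdir_bound t x y ht0).trans ?_
      have hmvt := phi_diff_bound t (x-y) (x+y) 8 ht0 (by linarith)
        (fun u _ => by
          have h8 : (0:ℝ) ≤ u^2/(8*t) := by positivity
          have : Real.exp (-u^2/(8*t)) ≤ 1 :=
            Real.exp_le_one_iff.2 (by rw [neg_div]; linarith)
          linarith)
      have he : (x+y) - (x-y) = 2*y := by ring
      rw [he] at hmvt
      calc (1/(2*t^2)) * |(x+y) * Real.exp (-(x+y)^2/(4*t)) - (x-y) * Real.exp (-(x-y)^2/(4*t))|
          ≤ (1/(2*t^2)) * (8 * (2*y)) := mul_le_mul_of_nonneg_left hmvt (by positivity)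
        _ = 8*y * t^(-2:ℝ) := by rw [hrp t ht0]; field_simp
  -- Region B bound on the inner integral, valid for x > M
  have FboundB : ∀ x : ℝ, M < x →
      (∫ t in Ioi T₀, |deriv (fun x' => Tdir t x' y) x| * t ^ (-(1:ℝ)/2)) ≤ 256*y/x^2 := by
    intro x hx
    have hx0 : 0 < x := hM.trans hx
    have hx2y : 2*y ≤ x := by
      have : 2*y ≤ 8*p := by linarith
      linarith [hM_def ▸ this]
    set g : ℝ → ℝ := fun t => 8*y * Real.exp (-x^2/(32*t)) / t^2 with hg
    set G : ℝ → ℝ := fun t => 256*y/x^2 * Real.exp (-x^2/(32*t)) with hG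
    have hfeq : (fun s : ℝ => -x^2/(32*s)) = fun s : ℝ => (-x^2/32) * s⁻¹ := by
      funext s
      rcases eq_or_ne s 0 with rfl | hs
      · simp
      · field_simp
    have hderiv : ∀ t ∈ Ici T₀, HasDerivAt G (g t) t := by
      intro t ht'
      have ht0 : 0 < t := lt_of_lt_of_le hT0 ht'
      have h1 : HasDerivAt (fun s : ℝ => -x^2/(32*s)) (x^2/(32*t^2)) t := by
        have h2 : HasDerivAt (fun s : ℝ => (-x^2/32) * s⁻¹) ((-x^2/32) * (-(t^2)⁻¹)) t :=
          (hasDerivAt_inv ht0.ne').const_mul _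
        rw [hfeq]
        convert h2 using 1
        field_simp
      have h3 := (h1.exp).const_mul (256*y/x^2)
      refine h3.congr_deriv ?_
      simp only [hg, hG]
      field_simp
      ring
    have hnonneg : ∀ t ∈ Ioi T₀, 0 ≤ g t := by
      intro t ht
      have ht0 : 0 < t := hT0.trans ht
      simp only [hg]
      positivity
    have htends : Filter.Tendsto G Filter.atTop (nhds (256*y/x^2)) := by
      have h1 : Filter.Tendsto (fun s : ℝ => -x^2/(32*s)) Filter.atTop (nhds 0) := by
        rw [hfeq]
        have := tendsto_inv_atTop_zero (𝕜 := ℝ)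
        have h2 := this.const_mul (-x^2/32)
        simpa using h2
      have h2 := (Real.continuous_exp.tendsto 0).comp h1
      rw [Real.exp_zero] at h2
      have h3 := h2.const_mul (256*y/x^2)
      simpa [hG] using h3
    have hgint : IntegrableOn g (Ioi T₀) :=
      integrableOn_Ioi_deriv_of_nonneg' hderiv hnonneg htends
    have hintB : ∫ t in Ioi T₀, g t = 256*y/x^2 - G T₀ :=
      integral_Ioi_of_hasDerivAt_of_nonneg' hderiv hnonneg htends
    have hGT0 : 0 ≤ G T₀ := by simp only [hG]; positivity
    have hmono : (∫ t in Ioi T₀, |deriv (fun x' => Tdir t x' y) x| * t ^ (-(1:ℝ)/2))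
        ≤ ∫ t in Ioi T₀, g t := by
      apply integral_mono_of_nonneg
      · filter_upwards [ae_restrict_mem measurableSet_Ioi] with t ht
        have ht0 : 0 < t := hT0.trans ht
        positivity
      · exact hgint
      · filter_upwards [ae_restrict_mem measurableSet_Ioi] with t ht
        have ht0 : 0 < t := hT0.trans ht
        refine (deriv_Tdir_bound t x y ht0).trans ?_
        have hmvt := phi_diff_bound t (x-y) (x+y) (8 * Real.exp (-x^2/(32*t))) ht0 (by linarith)
          (fun u hu => by
            have hu1 : x/2 ≤ u := by
              have := hu.1
              linarith
            have hu2 : x^2/4 ≤ u^2 := by nlinarith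
            have harg : -u^2/(8*t) ≤ -x^2/(32*t) := by
              rw [div_le_div_iff₀ (by positivity : (0:ℝ) < 8*t) (by positivity : (0:ℝ) < 32*t)]
              nlinarith
            have := Real.exp_le_exp.2 harg
            linarith)
        have he : (x+y) - (x-y) = 2*y := by ring
        rw [he] at hmvt
        calc (1/(2*t^2)) * |(x+y) * Real.exp (-(x+y)^2/(4*t)) - (x-y) * Real.exp (-(x-y)^2/(4*t))|
            ≤ (1/(2*t^2)) * (8 * Real.exp (-x^2/(32*t)) * (2*y)) :=
              mul_le_mul_of_nonneg_left hmvt (by positivity)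
          _ = g t := by simp only [hg]; ring
    rw [hintB] at hmono
    linarith
  -- Outer integral
  have hIntA : IntegrableOn (fun x : ℝ => if x ≤ M then 8*y/T₀ else 256*y/x^2) (Ioc 0 M) := by
    have hconst : IntegrableOn (fun _ : ℝ => 8*y/T₀) (Ioc 0 M) :=
      integrableOn_const measure_Ioc_lt_top.ne
    exact hconst.congr_fun (fun x hx => (if_pos hx.2).symm) measurableSet_Ioc
  have hIntB : IntegrableOn (fun x : ℝ => if x ≤ M then 8*y/T₀ else 256*y/x^2) (Ioi M) := by
    have hbase : IntegrableOn (fun x : ℝ => 256*y * x^(-2:ℝ)) (Ioi M) :=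
      (integrableOn_Ioi_rpow_of_lt (by norm_num : (-2:ℝ) < -1) hM).const_mul _
    refine hbase.congr_fun (fun x hx => ?_) measurableSet_Ioi
    have hx0 : 0 < x := hM.trans hx
    show 256*y * x^(-2:ℝ) = if x ≤ M then 8*y/T₀ else 256*y/x^2
    rw [if_neg (not_le.2 hx), hrp x hx0, div_eq_mul_inv]
  have hgOutInt : IntegrableOn (fun x : ℝ => if x ≤ M then 8*y/T₀ else 256*y/x^2) (Ioi 0) := by
    rw [← Ioc_union_Ioi_eq_Ioi hM.le]
    exact hIntA.union hIntB
  have step := integral_mono_of_nonneg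
    (f := fun x : ℝ => ∫ t in Ioi T₀, |deriv (fun x' => Tdir t x' y) x| * t ^ (-(1:ℝ)/2))
    (g := fun x : ℝ => if x ≤ M then 8*y/T₀ else 256*y/x^2)
    (μ := volume.restrict (Ioi 0))
    (Filter.Eventually.of_forall fun x => setIntegral_nonneg measurableSet_Ioi fun t ht =>
      mul_nonneg (abs_nonneg _) (Real.rpow_nonneg ((hT0.trans ht).le) _))
    hgOutInt
    (by
      filter_upwards [ae_restrict_mem measurableSet_Ioi] with x _
      by_cases hxM : x ≤ M
      · rw [if_pos hxM]; exact FboundA x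
      · rw [if_neg hxM]; exact FboundB x (not_le.1 hxM))
  refine step.trans ?_
  -- compute the integral of the piecewise bound
  rw [← Ioc_union_Ioi_eq_Ioi hM.le,
    setIntegral_union (Ioc_disjoint_Ioi le_rfl) measurableSet_Ioi hIntA hIntB]
  have h1eq : ∫ x in Ioc (0:ℝ) M, (if x ≤ M then 8*y/T₀ else 256*y/x^2) = (8*y/T₀) * M := by
    rw [setIntegral_congr_fun measurableSet_Ioc
      (g := fun _ : ℝ => 8*y/T₀) (fun x hx => if_pos hx.2)]
    simp [Real.volume_Ioc, ENNReal.toReal_ofReal hM.le]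
    rw [max_eq_left hM.le]
    ring
  have h2eq : ∫ x in Ioi M, (if x ≤ M then 8*y/T₀ else 256*y/x^2) = 256*y/M := by
    rw [setIntegral_congr_fun measurableSet_Ioi
      (g := fun x : ℝ => 256*y * x^(-2:ℝ)) (fun x hx => by
        have hx0 : 0 < x := hM.trans hx
        show (if x ≤ M then 8*y/T₀ else 256*y/x^2) = 256*y * x^(-2:ℝ)
        rw [if_neg (not_le.2 hx), hrp x hx0, div_eq_mul_inv]),
      MeasureTheory.integral_const_mul, integral_Ioi_rpow_of_lt (by norm_num) hM]
    norm_num [Real.rpow_neg_one]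
    ring
  rw [h1eq, h2eq, hT, hM_def]
  have hyp : y/p ≤ 4 := by rw [div_le_iff₀ hp]; linarith
  have hfin : 8*y/p^2 * (8*p) + 256*y/(8*p) = 96 * (y/p) := by
    field_simp
    ring
  rw [hfin]
  linarith
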